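/- With the GLM notation below, for all θ, θ' ∈ ℝ^d one has ‖θ − θ'‖_{H(θ')} ≤ (1 + M·D(θ − θ'))·‖f_t(θ) − f_t(θ')‖_{H(θ')⁻¹}, where for a positive definite matrix A, ‖v‖_A = √(vᵀAv). -/

import Mathlib

open Matrix

lemma mySum_mulVec {d : ℕ} {ι : Type*} (s : Finset ι) (A : ι → Matrix (Fin d) (Fin d) ℝ)
    (w : Fin d → ℝ) : (∑ l ∈ s, A l) *ᵥ w = ∑ l ∈ s, A l *ᵥ w := by
  ext j
  simp [Matrix.mulVec, dotProduct, Matrix.sum_apply, Finset.sum_apply, Finset.sum_mul]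
  exact Finset.sum_comm

lemma myDot_sum {d : ℕ} {ι : Type*} (s : Finset ι) (v : Fin d → ℝ) (f : ι → (Fin d → ℝ)) :
    v ⬝ᵥ (∑ l ∈ s, f l) = ∑ l ∈ s, v ⬝ᵥ f l := by
  simp [dotProduct, Finset.sum_apply, Finset.mul_sum]
  exact Finset.sum_comm

lemma myVecMulVec_mulVec {d : ℕ} (a b w : Fin d → ℝ) :
    vecMulVec a b *ᵥ w = (b ⬝ᵥ w) • a := by
  ext i
  simp [Matrix.mulVec, dotProduct, vecMulVec_apply, Finset.mul_sum, mul_assoc,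
    mul_comm, mul_left_comm]

lemma myCS {d : ℕ} (A : Matrix (Fin d) (Fin d) ℝ) (hsym : Aᵀ = A)
    (hpsd : ∀ v : Fin d → ℝ, 0 ≤ v ⬝ᵥ A *ᵥ v) (x y : Fin d → ℝ) :
    (x ⬝ᵥ A *ᵥ y) ^ 2 ≤ (x ⬝ᵥ A *ᵥ x) * (y ⬝ᵥ A *ᵥ y) := by
  have hswap : ∀ u v : Fin d → ℝ, u ⬝ᵥ A *ᵥ v = v ⬝ᵥ A *ᵥ u := by
    intro u v
    rw [Matrix.dotProduct_mulVec, ← Matrix.mulVec_transpose, hsym, dotProduct_comm]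
  set a := x ⬝ᵥ A *ᵥ x with ha
  set b := y ⬝ᵥ A *ᵥ y with hb
  set c := x ⬝ᵥ A *ᵥ y with hc
  have hq : ∀ s r : ℝ, 0 ≤ s ^ 2 * a - 2 * s * r * c + r ^ 2 * b := by
    intro s r
    have h := hpsd (s • x - r • y)
    have e : (s • x - r • y) ⬝ᵥ A *ᵥ (s • x - r • y)
        = s ^ 2 * a - 2 * s * r * c + r ^ 2 * b := by
      simp only [Matrix.mulVec_sub, Matrix.mulVec_smul, dotProduct_sub,
        sub_dotProduct, dotProduct_smul, smul_dotProduct,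
        smul_eq_mul, hswap y x, ← hc, ← ha, ← hb]
      ring
    linarith [e ▸ h]
  rcases eq_or_lt_of_le (hpsd y) with hb0 | hbpos
  · have hb0' : b = 0 := by rw [hb]; exact hb0.symm
    have hc0 : c = 0 := by
      by_contra hcne
      have h := hq 1 ((a + 1) / (2 * c))
      rw [hb0'] at h
      have he : (1:ℝ) ^ 2 * a - 2 * 1 * ((a + 1) / (2 * c)) * c + ((a + 1) / (2 * c)) ^ 2 * 0 = -1 := by
        field_simp
        ring
      rw [he] at h
      linarith
    rw [hc0, hb0']
    norm_num
  · have h := hq b c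
    nlinarith [h, hbpos]

lemma sc_exp_bound {M : ℝ} (hM : 0 < M) {μ : ℝ → ℝ}
    (hdiff2 : Differentiable ℝ (deriv μ)) (hpos : ∀ u, 0 < deriv μ u)
    (hsc : ∀ u, |deriv (deriv μ) u| ≤ M * deriv μ u) :
    ∀ u z : ℝ, Real.exp (-(M * |z|)) * deriv μ u ≤ deriv μ (u + z) := by
  have hlip : LipschitzWith M.toNNReal (fun s => Real.log (deriv μ s)) := by
    apply lipschitzWith_of_nnnorm_deriv_le
    · exact fun s => DifferentiableAt.log (hdiff2 s) (hpos s).ne'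
    · intro s
      have hd : deriv (fun s => Real.log (deriv μ s)) s
          = deriv (deriv μ) s / deriv μ s :=
        (HasDerivAt.log (hdiff2 s).hasDerivAt (hpos s).ne').deriv
      rw [← NNReal.coe_le_coe, coe_nnnorm, Real.coe_toNNReal _ hM.le, hd,
        Real.norm_eq_abs, abs_div, abs_of_pos (hpos s), div_le_iff₀ (hpos s)]
      exact hsc s
  intro u z
  have hd := hlip.dist_le_mul (u + z) u
  rw [Real.dist_eq, Real.dist_eq, Real.coe_toNNReal _ hM.le, add_sub_cancel_left] at hd
  have h1 : Real.log (deriv μ u) - M * |z| ≤ Real.log (deriv μ (u + z)) := by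
    have := neg_abs_le (Real.log (deriv μ (u + z)) - Real.log (deriv μ u))
    linarith
  calc Real.exp (-(M * |z|)) * deriv μ u
      = Real.exp (Real.log (deriv μ u) - M * |z|) := by
        rw [Real.exp_sub, Real.exp_log (hpos u), Real.exp_neg]; ring
    _ ≤ Real.exp (Real.log (deriv μ (u + z))) := Real.exp_le_exp.2 h1
    _ = deriv μ (u + z) := Real.exp_log (hpos _)

lemma chord_right {M : ℝ} (hM : 0 < M) {μ : ℝ → ℝ} (hdiff : Differentiable ℝ μ)
    (hdiff2 : Differentiable ℝ (deriv μ)) (hpos : ∀ u, 0 < deriv μ u)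
    (hsc : ∀ u, |deriv (deriv μ) u| ≤ M * deriv μ u) :
    ∀ u a : ℝ, 0 ≤ a →
      deriv μ u / M * (1 - Real.exp (-(M * a))) ≤ μ (u + a) - μ u := by
  intro u a ha
  set g : ℝ → ℝ := fun s => μ (u + s) - deriv μ u / M * (1 - Real.exp (-(M * s))) with hgdef
  have hg : ∀ s, HasDerivAt g (deriv μ (u + s) - deriv μ u * Real.exp (-(M * s))) s := by
    intro s
    have h1 : HasDerivAt (fun s => μ (u + s)) (deriv μ (u + s)) s := by
      have := (hdiff (u + s)).hasDerivAt.comp s ((hasDerivAt_id s).const_add u)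
      rw [mul_one] at this
      exact this
    have h2 : HasDerivAt (fun s : ℝ => -(M * s)) (-M) s := by
      have := ((hasDerivAt_id s).const_mul M).neg
      rw [mul_one] at this
      exact this
    have h4 : HasDerivAt (fun s => deriv μ u / M * (1 - Real.exp (-(M * s))))
        (deriv μ u * Real.exp (-(M * s))) s := by
      have h5 := ((hasDerivAt_const s (1:ℝ)).sub h2.exp).const_mul (deriv μ u / M)
      exact h5.congr_deriv (by rw [div_mul_eq_mul_div, div_eq_iff hM.ne']; ring)
    exact h1.sub h4
  have hmono : MonotoneOn g (Set.Ici (0:ℝ)) := by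
    apply monotoneOn_of_deriv_nonneg (convex_Ici 0)
    · exact (Continuous.continuousOn (by
        have : Differentiable ℝ g := fun s => (hg s).differentiableAt
        exact this.continuous))
    · exact fun s _ => (hg s).differentiableAt.differentiableWithinAt
    · intro s hs
      rw [interior_Ici] at hs
      rw [(hg s).deriv]
      have hb := sc_exp_bound hM hdiff2 hpos hsc u s
      rw [abs_of_pos hs] at hb
      nlinarith [hb]
  have h0 := hmono Set.self_mem_Ici (Set.mem_Ici.2 ha) ha
  have hg0 : g 0 = μ u := by simp [hgdef]
  have hga : g a = μ (u + a) - deriv μ u / M * (1 - Real.exp (-(M * a))) := rfl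
  rw [hg0, hga] at h0
  linarith

lemma chord_left {M : ℝ} (hM : 0 < M) {μ : ℝ → ℝ} (hdiff : Differentiable ℝ μ)
    (hdiff2 : Differentiable ℝ (deriv μ)) (hpos : ∀ u, 0 < deriv μ u)
    (hsc : ∀ u, |deriv (deriv μ) u| ≤ M * deriv μ u) :
    ∀ u a : ℝ, 0 ≤ a →
      deriv μ u / M * (1 - Real.exp (-(M * a))) ≤ μ u - μ (u - a) := by
  intro u a ha
  set g : ℝ → ℝ := fun s => -μ (u - s) - deriv μ u / M * (1 - Real.exp (-(M * s))) with hgdef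
  have hg : ∀ s, HasDerivAt g (deriv μ (u - s) - deriv μ u * Real.exp (-(M * s))) s := by
    intro s
    have h1 : HasDerivAt (fun s => μ (u - s)) (-deriv μ (u - s)) s := by
      have := (hdiff (u - s)).hasDerivAt.comp s (((hasDerivAt_id s).neg).const_add u)
      simpa [sub_eq_add_neg, Function.comp_def] using this
    have h2 : HasDerivAt (fun s : ℝ => -(M * s)) (-M) s := by
      have := ((hasDerivAt_id s).const_mul M).neg
      rw [mul_one] at this
      exact this
    have h4 : HasDerivAt (fun s => deriv μ u / M * (1 - Real.exp (-(M * s))))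
        (deriv μ u * Real.exp (-(M * s))) s := by
      have h5 := ((hasDerivAt_const s (1:ℝ)).sub h2.exp).const_mul (deriv μ u / M)
      exact h5.congr_deriv (by rw [div_mul_eq_mul_div, div_eq_iff hM.ne']; ring)
    have := h1.neg.sub h4
    rw [neg_neg] at this
    exact this
  have hmono : MonotoneOn g (Set.Ici (0:ℝ)) := by
    apply monotoneOn_of_deriv_nonneg (convex_Ici 0)
    · exact (Continuous.continuousOn (by
        have : Differentiable ℝ g := fun s => (hg s).differentiableAt
        exact this.continuous))
    · exact fun s _ => (hg s).differentiableAt.differentiableWithinAt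
    · intro s hs
      rw [interior_Ici] at hs
      rw [(hg s).deriv]
      have hb := sc_exp_bound hM hdiff2 hpos hsc u (-s)
      rw [abs_neg, abs_of_pos hs] at hb
      have : u + -s = u - s := by ring
      rw [this] at hb
      nlinarith [hb]
  have h0 := hmono Set.self_mem_Ici (Set.mem_Ici.2 ha) ha
  have hg0 : g 0 = -μ u := by simp [hgdef]
  have hga : g a = -μ (u - a) - deriv μ u / M * (1 - Real.exp (-(M * a))) := rfl
  rw [hg0, hga] at h0
  linarith

lemma key_alg {M : ℝ} (hM : 0 < M) (K b c G : ℝ) (hK : 0 < K) (hb : 0 ≤ b) (hbc : b ≤ c)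
    (hG : K / M * (1 - Real.exp (-(M * b))) ≤ G) :
    K * b ^ 2 ≤ (1 + M * c) * (b * G) := by
  set E := Real.exp (-(M * b)) with hE
  have hE1 : E ≤ 1 := Real.exp_le_one_iff.2 (by nlinarith)
  have hEpos : 0 < E := Real.exp_pos _
  have hx : M * b ≤ (1 + M * b) * (1 - E) := by
    have h1 := Real.add_one_le_exp (M * b)
    have h2 : (1 + M * b) * E ≤ 1 := by
      rw [hE, Real.exp_neg]
      have h3 := mul_le_mul_of_nonneg_right h1
        (inv_nonneg.2 (Real.exp_pos (M * b)).le)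
      rw [mul_inv_cancel₀ (Real.exp_pos (M * b)).ne'] at h3
      nlinarith [h3]
    nlinarith [h2]
  have hG0 : 0 ≤ G := le_trans (mul_nonneg (by positivity) (by linarith)) hG
  have s1 : K * b ^ 2 ≤ (1 + M * b) * (b * (K / M * (1 - E))) := by
    have h := mul_le_mul_of_nonneg_left hx (show 0 ≤ K * b / M by positivity)
    calc K * b ^ 2 = K * b / M * (M * b) := by field_simp
      _ ≤ K * b / M * ((1 + M * b) * (1 - E)) := h
      _ = (1 + M * b) * (b * (K / M * (1 - E))) := by ring
  have s2 : (1 + M * b) * (b * (K / M * (1 - E))) ≤ (1 + M * b) * (b * G) :=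
    mul_le_mul_of_nonneg_left (mul_le_mul_of_nonneg_left hG hb) (by positivity)
  have s3 : (1 + M * b) * (b * G) ≤ (1 + M * c) * (b * G) :=
    mul_le_mul_of_nonneg_right (by nlinarith) (mul_nonneg hb hG0)
  linarith

lemma key_pt {M : ℝ} (hM : 0 < M) {μ : ℝ → ℝ} (hdiff : Differentiable ℝ μ)
    (hdiff2 : Differentiable ℝ (deriv μ)) (hpos : ∀ u, 0 < deriv μ u)
    (hsc : ∀ u, |deriv (deriv μ) u| ≤ M * deriv μ u)
    (u a c : ℝ) (hac : |a| ≤ c) :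
    deriv μ u * a ^ 2 ≤ (1 + M * c) * (a * (μ (u + a) - μ u)) := by
  rcases le_or_gt 0 a with ha | ha
  · exact key_alg hM (deriv μ u) a c (μ (u + a) - μ u) (hpos u) ha
      (by rwa [abs_of_nonneg ha] at hac)
      (chord_right hM hdiff hdiff2 hpos hsc u a ha)
  · have hb' : (0:ℝ) ≤ -a := by linarith
    have hch := chord_left hM hdiff hdiff2 hpos hsc u (-a) hb'
    rw [show u - -a = u + a by ring] at hch
    have hb := key_alg hM (deriv μ u) (-a) c (μ u - μ (u + a)) (hpos u) hb'
      (by rwa [abs_of_neg ha] at hac) hch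
    have h1 : -a * (μ u - μ (u + a)) = a * (μ (u + a) - μ u) := by ring
    have h2 : (-a) ^ 2 = a ^ 2 := by ring
    rw [h1, h2] at hb
    exact hb
/-- GLM parameter-distance bound:
`‖θ − θ'‖_{H(θ')} ≤ (1 + M·D(θ − θ'))·‖f_t(θ) − f_t(θ')‖_{H(θ')⁻¹}`. -/
theorem dist_H_le_grad_diff
    {d t : ℕ} (M lam : ℝ) (hM : 0 < M) (hlam : 0 < lam)
    (μ : ℝ → ℝ) (hdiff : Differentiable ℝ μ) (hdiff2 : Differentiable ℝ (deriv μ))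
    (hpos : ∀ u : ℝ, 0 < deriv μ u)
    (hsc : ∀ u : ℝ, |deriv (deriv μ) u| ≤ M * deriv μ u)
    (𝒳 : Finset (Fin d → ℝ)) (h𝒳ne : 𝒳.Nonempty)
    (h𝒳norm : ∀ X ∈ 𝒳, Real.sqrt (∑ i, X i ^ 2) ≤ 1)
    (X : Fin t → (Fin d → ℝ)) (hX : ∀ l, X l ∈ 𝒳)
    (H : (Fin d → ℝ) → Matrix (Fin d) (Fin d) ℝ)
    (hH : ∀ θ, H θ = ∑ l, deriv μ (X l ⬝ᵥ θ) • vecMulVec (X l) (X l)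
        + lam • (1 : Matrix (Fin d) (Fin d) ℝ))
    (f : (Fin d → ℝ) → (Fin d → ℝ))
    (hf : ∀ θ, f θ = ∑ l, μ (X l ⬝ᵥ θ) • X l + lam • θ)
    (D : (Fin d → ℝ) → ℝ)
    (hD : ∀ v, D v = 𝒳.sup' h𝒳ne (fun Y => |Y ⬝ᵥ v|)) :
    ∀ θ θ' : Fin d → ℝ,
      Real.sqrt ((θ - θ') ⬝ᵥ (H θ').mulVec (θ - θ'))
        ≤ (1 + M * D (θ - θ')) *
          Real.sqrt ((f θ - f θ') ⬝ᵥ (H θ')⁻¹.mulVec (f θ - f θ')) := by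
  intro θ θ'
  set Δ : Fin d → ℝ := θ - θ' with hΔ
  set g : Fin d → ℝ := f θ - f θ' with hg
  set A : Matrix (Fin d) (Fin d) ℝ := H θ' with hA
  -- quadratic form expansion
  have hquad : ∀ v w : Fin d → ℝ, v ⬝ᵥ A *ᵥ w
      = (∑ l, deriv μ (X l ⬝ᵥ θ') * ((X l ⬝ᵥ w) * (X l ⬝ᵥ v))) + lam * (v ⬝ᵥ w) := by
    intro v w
    rw [hA, hH, Matrix.add_mulVec, dotProduct_add, Matrix.smul_mulVec,
      Matrix.one_mulVec, dotProduct_smul, smul_eq_mul, mySum_mulVec, myDot_sum]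
    congr 1
    apply Finset.sum_congr rfl
    intro l _
    rw [Matrix.smul_mulVec, dotProduct_smul, myVecMulVec_mulVec,
      dotProduct_smul, smul_eq_mul, smul_eq_mul, dotProduct_comm v (X l)]
  -- symmetry
  have hsym : Aᵀ = A := by
    rw [hA, hH]
    ext i j
    simp only [Matrix.transpose_apply, Matrix.add_apply, Matrix.sum_apply,
      Matrix.smul_apply, vecMulVec_apply, Matrix.one_apply, smul_eq_mul]
    congr 1
    · exact Finset.sum_congr rfl fun l _ => by ring
    · by_cases h : i = j
      · subst h; rfl
      · rw [if_neg h, if_neg fun hji => h hji.symm]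
  have hswap : ∀ u v : Fin d → ℝ, u ⬝ᵥ A *ᵥ v = v ⬝ᵥ A *ᵥ u := by
    intro u v
    rw [Matrix.dotProduct_mulVec, ← Matrix.mulVec_transpose, hsym, dotProduct_comm]
  -- positivity
  have hdotself : ∀ v : Fin d → ℝ, 0 ≤ v ⬝ᵥ v := by
    intro v
    simp only [dotProduct]
    exact Finset.sum_nonneg fun i _ => mul_self_nonneg (v i)
  have hsumnn : ∀ v : Fin d → ℝ,
      0 ≤ ∑ l, deriv μ (X l ⬝ᵥ θ') * ((X l ⬝ᵥ v) * (X l ⬝ᵥ v)) :=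
    fun v => Finset.sum_nonneg fun l _ => mul_nonneg (hpos _).le (mul_self_nonneg _)
  have hpsd : ∀ v : Fin d → ℝ, 0 ≤ v ⬝ᵥ A *ᵥ v := by
    intro v
    rw [hquad v v]
    have := mul_nonneg hlam.le (hdotself v)
    linarith [hsumnn v]
  have hherm : A.IsHermitian := by
    show Aᴴ = A
    ext i j
    simp only [Matrix.conjTranspose_apply, star_trivial]
    exact congrFun (congrFun hsym i) j
  have hposdef : A.PosDef := by
    refine Matrix.PosDef.of_dotProduct_mulVec_pos hherm fun v hv => ?_
    have hstar : star v = v := by ext i; simp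
    rw [hstar, hquad v v]
    have hvv : 0 < v ⬝ᵥ v :=
      lt_of_le_of_ne (hdotself v) fun h => hv (dotProduct_self_eq_zero.mp h.symm)
    have := mul_pos hlam hvv
    linarith [hsumnn v]
  have hdet : IsUnit A.det := isUnit_iff_ne_zero.2 hposdef.det_pos.ne'
  have hinv : A * A⁻¹ = 1 := Matrix.mul_nonsing_inv _ hdet
  -- D bounds
  have hDl : ∀ l, |X l ⬝ᵥ Δ| ≤ D Δ := by
    intro l
    rw [hD]
    exact Finset.le_sup' (fun Y => |Y ⬝ᵥ Δ|) (hX l)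
  have hc0 : 0 ≤ D Δ := by
    obtain ⟨Y, hY⟩ := h𝒳ne
    rw [hD]
    exact le_trans (abs_nonneg (Y ⬝ᵥ Δ)) (Finset.le_sup' (fun Y => |Y ⬝ᵥ Δ|) hY)
  -- dot product with gradient difference
  have hXθ : ∀ l, X l ⬝ᵥ θ = X l ⬝ᵥ θ' + X l ⬝ᵥ Δ := by
    intro l
    rw [hΔ, dotProduct_sub]
    ring
  have hgsum : g = (∑ l, (μ (X l ⬝ᵥ θ) - μ (X l ⬝ᵥ θ')) • X l) + lam • Δ := by
    rw [hg, hf θ, hf θ', hΔ]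
    ext i
    simp only [Pi.add_apply, Pi.sub_apply, Pi.smul_apply, Finset.sum_apply, smul_eq_mul,
      sub_mul, Finset.sum_sub_distrib, mul_sub]
    ring
  have hdot : Δ ⬝ᵥ g
      = (∑ l, (μ (X l ⬝ᵥ θ) - μ (X l ⬝ᵥ θ')) * (X l ⬝ᵥ Δ)) + lam * (Δ ⬝ᵥ Δ) := by
    rw [hgsum, dotProduct_add, myDot_sum, dotProduct_smul, smul_eq_mul]
    congr 1
    apply Finset.sum_congr rfl
    intro l _
    rw [dotProduct_smul, smul_eq_mul, dotProduct_comm Δ (X l)]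
  -- Step A
  have hstepA : Δ ⬝ᵥ A *ᵥ Δ ≤ (1 + M * D Δ) * (Δ ⬝ᵥ g) := by
    rw [hquad Δ Δ, hdot]
    have hper : ∀ l : Fin t, deriv μ (X l ⬝ᵥ θ') * ((X l ⬝ᵥ Δ) * (X l ⬝ᵥ Δ))
        ≤ (1 + M * D Δ) * ((μ (X l ⬝ᵥ θ) - μ (X l ⬝ᵥ θ')) * (X l ⬝ᵥ Δ)) := by
      intro l
      have hk := key_pt hM hdiff hdiff2 hpos hsc (X l ⬝ᵥ θ') (X l ⬝ᵥ Δ) (D Δ) (hDl l)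
      rw [← hXθ l] at hk
      have e1 : deriv μ (X l ⬝ᵥ θ') * ((X l ⬝ᵥ Δ) * (X l ⬝ᵥ Δ))
          = deriv μ (X l ⬝ᵥ θ') * (X l ⬝ᵥ Δ) ^ 2 := by ring
      have e2 : (1 + M * D Δ) * ((μ (X l ⬝ᵥ θ) - μ (X l ⬝ᵥ θ')) * (X l ⬝ᵥ Δ))
          = (1 + M * D Δ) * ((X l ⬝ᵥ Δ) * (μ (X l ⬝ᵥ θ) - μ (X l ⬝ᵥ θ'))) := by ring
      rw [e1, e2]
      exact hk
    have hsum := Finset.sum_le_sum fun l (_ : l ∈ Finset.univ) => hper l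
    rw [← Finset.mul_sum] at hsum
    have h1 := mul_nonneg hlam.le (hdotself Δ)
    nlinarith [hsum, mul_nonneg (mul_nonneg hM.le hc0) h1]
  -- Step B : Cauchy-Schwarz
  have hcs := myCS A hsym hpsd Δ (A⁻¹ *ᵥ g)
  rw [Matrix.mulVec_mulVec, hinv, Matrix.one_mulVec,
    dotProduct_comm (A⁻¹ *ᵥ g) g] at hcs
  -- combine
  set p : ℝ := Δ ⬝ᵥ A *ᵥ Δ with hp
  set q : ℝ := g ⬝ᵥ A⁻¹ *ᵥ g with hqdef
  set c1 : ℝ := 1 + M * D Δ with hc1def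
  have hc1 : 0 < c1 := by rw [hc1def]; nlinarith
  have hp0 : 0 ≤ p := hpsd Δ
  have hdg0 : 0 ≤ Δ ⬝ᵥ g := by nlinarith [hstepA, hp0, hc1]
  have hpsq : p ^ 2 ≤ c1 ^ 2 * (p * q) := by
    have h1 : p ^ 2 ≤ (c1 * (Δ ⬝ᵥ g)) ^ 2 := by nlinarith [hstepA, hp0, mul_nonneg hc1.le hdg0]
    nlinarith [hcs, sq_nonneg c1, h1, mul_le_mul_of_nonneg_left hcs (sq_nonneg c1)]
  rcases eq_or_lt_of_le hp0 with hpz | hppos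
  · rw [← hpz, Real.sqrt_zero]
    positivity
  · have hle : p ≤ c1 ^ 2 * q := by nlinarith [hpsq, hppos]
    calc Real.sqrt p ≤ Real.sqrt (c1 ^ 2 * q) := Real.sqrt_le_sqrt hle
      _ = c1 * Real.sqrt q := by
          rw [Real.sqrt_mul (sq_nonneg c1), Real.sqrt_sq hc1.le]
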